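/- Let p be a prime and M a module over S = ℤ[t]/(t^p − 1) with ker(1 − t^M) = 0. Then N(t^M) = 0 and the cokernel of (1 − t^M) is a vector space over ℤ/p. -/

import Mathlib

/-- The norm endomorphism `N(t) = 1 + t + ⋯ + t^{p-1}` of a module over `ℤ[t]/(t^p - 1)`,
encoded as an abelian group `M` with an endomorphism `t` satisfying `t^p = 1`. -/
def normEnd (p : ℕ) {M : Type*} [AddCommGroup M] (t : AddMonoid.End M) : AddMonoid.End M :=
  ∑ j ∈ Finset.range p, t ^ j

/-- For a prime `p` and a module `M` over `S = ℤ[t]/(t^p − 1)` with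
`ker(1 − t^M) = 0`, one has `N(t^M) = 0`, and the cokernel of `1 − t^M` is a `ℤ/p`-vector space
(i.e. it is annihilated by `p`). -/
theorem stmt7 (p : ℕ) (hp : p.Prime) {M : Type*} [AddCommGroup M] (t : AddMonoid.End M)
    (ht : t ^ p = 1) (hker : AddMonoidHom.ker ((1 : AddMonoid.End M) - t) = ⊥) :
    normEnd p t = 0 ∧
    ∀ y : M ⧸ AddMonoidHom.range ((1 : AddMonoid.End M) - t), p • y = 0 := by
  set f : AddMonoid.End M := (1 : AddMonoid.End M) - t with hf
  have hinj : Function.Injective f := by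
    intro a b h
    exact (AddMonoidHom.ker_eq_bot_iff _).mp hker h
  have h1 : ∀ j : ℕ, f * (∑ i ∈ Finset.range j, t ^ i) = 1 - t ^ j := by
    intro j
    have := mul_geom_sum t j
    have hneg : f = -(t - 1) := by rw [hf, neg_sub]
    rw [hneg, neg_mul, this, neg_sub]
  have hmul : f * normEnd p t = 0 := by
    rw [normEnd, h1 p, ht, sub_self]
  have hN : normEnd p t = 0 := by
    refine AddMonoidHom.ext fun x => ?_
    have hx : f (normEnd p t x) = 0 := by
      have : (f * normEnd p t) x = (0 : AddMonoid.End M) x := by rw [hmul]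
      simpa using this
    have := hinj (a₂ := 0) (by simpa using hx)
    exact (by simpa using this : normEnd p t x = 0)
  refine ⟨hN, ?_⟩
  have key : ∀ x : M, p • x ∈ AddMonoidHom.range f := by
    intro x
    set g : AddMonoid.End M := ∑ j ∈ Finset.range p, ∑ i ∈ Finset.range j, t ^ i with hg
    refine ⟨g x, ?_⟩
    have hfg : f * g = p • (1 : AddMonoid.End M) := by
      rw [hg, Finset.mul_sum]
      simp only [h1]
      rw [Finset.sum_sub_distrib]
      have : (∑ j ∈ Finset.range p, t ^ j) = 0 := hN
      rw [this, sub_zero, Finset.sum_const, Finset.card_range]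
    have : (f * g) x = (p • (1 : AddMonoid.End M)) x := by rw [hfg]
    exact this
  intro y
  induction y using QuotientAddGroup.induction_on with
  | H x =>
    rw [← QuotientAddGroup.mk_nsmul, QuotientAddGroup.eq_zero_iff]
    exact key x
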